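/- Let H₁, H₂ be separable complex Hilbert spaces and (X, μ) = (X₁ × X₂, μ₁ ⊗ μ₂) the product of measure spaces with σ-finite positive measures. For each k ∈ ℕ let f_k : X₁ → H₁ and g_k : X₂ → H₂ be Bessel mappings with Bessel bounds B_k and B'_k respectively, and assume B := (∑_k B_k)·(∑_l B'_l) < ∞. Assume moreover that for μ-a.e. (x₁,x₂) the series F(x₁,x₂) := ∑_k f_k(x₁) ⊗ g_k(x₂) converges weakly in H₁ ⊗ H₂. Then F is a Bessel mapping for H₁ ⊗ H₂ with respect to (X, μ) with Bessel bound B. -/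

import Mathlib

open MeasureTheory ENNReal

noncomputable section

namespace ContFrame

variable {X : Type*} {H : Type*}

/-- The paper's inner product `⟨f, g⟩`: linear in the first argument and
conjugate-linear in the second (Mathlib's `inner` is conjugate-linear in the first). -/
def pinner [NormedAddCommGroup H] [InnerProductSpace ℂ H] (f g : H) : ℂ :=
  @inner ℂ _ _ g f

/-- `∫_X |⟨f, F x⟩|² dμ(x)`, as a lower integral. -/
def frameInt [MeasurableSpace X] [NormedAddCommGroup H] [InnerProductSpace ℂ H]
    (μ : Measure X) (F : X → H) (f : H) : ℝ≥0∞ :=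
  ∫⁻ x, (‖pinner f (F x)‖₊ : ℝ≥0∞) ^ 2 ∂μ

/-- `F` is weakly measurable: `x ↦ ⟨f, F x⟩` is μ-measurable for every `f`. -/
def WeaklyMeasurable [MeasurableSpace X] [NormedAddCommGroup H] [InnerProductSpace ℂ H]
    (μ : Measure X) (F : X → H) : Prop :=
  ∀ f : H, AEMeasurable (fun x => pinner f (F x)) μ

/-- `F` is a Bessel mapping for `H` w.r.t. `(X, μ)` with Bessel bound `B < ∞`. -/
def IsBesselMapping [MeasurableSpace X] [NormedAddCommGroup H] [InnerProductSpace ℂ H]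
    (μ : Measure X) (F : X → H) (B : ℝ≥0∞) : Prop :=
  B < ⊤ ∧ WeaklyMeasurable μ F ∧
    ∀ f : H, frameInt μ F f ≤ B * (‖f‖₊ : ℝ≥0∞) ^ 2

/-- `F` is a continuous frame for `H` w.r.t. `(X, μ)` with frame bounds `0 < A ≤ B < ∞`:
`A ‖f‖² ≤ ∫_X |⟨f, F x⟩|² dμ(x) ≤ B ‖f‖²` for all `f ∈ H`. -/
def IsContinuousFrame [MeasurableSpace X] [NormedAddCommGroup H] [InnerProductSpace ℂ H]
    (μ : Measure X) (F : X → H) (A B : ℝ≥0∞) : Prop :=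
  0 < A ∧ A ≤ B ∧ B < ⊤ ∧ WeaklyMeasurable μ F ∧
    ∀ f : H, A * (‖f‖₊ : ℝ≥0∞) ^ 2 ≤ frameInt μ F f ∧
      frameInt μ F f ≤ B * (‖f‖₊ : ℝ≥0∞) ^ 2

/-- A realization of the Hilbert tensor product `H = H₁ ⊗ H₂`: a bilinear map
`tmul` whose simple tensors satisfy `⟪a⊗b, c⊗d⟫ = ⟪a,c⟫⟪b,d⟫` and span a dense subspace. -/
structure HilbertTensorProduct (H₁ H₂ H : Type*)
    [NormedAddCommGroup H₁] [InnerProductSpace ℂ H₁]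
    [NormedAddCommGroup H₂] [InnerProductSpace ℂ H₂]
    [NormedAddCommGroup H] [InnerProductSpace ℂ H] where
  tmul : H₁ →ₗ[ℂ] H₂ →ₗ[ℂ] H
  inner_tmul : ∀ (a c : H₁) (b d : H₂),
    (inner ℂ (tmul a b) (tmul c d) : ℂ) = (inner ℂ a c : ℂ) * (inner ℂ b d : ℂ)
  dense_span : Dense (↑(Submodule.span ℂ {z : H | ∃ a b, z = tmul a b}) : Set H)

section AuxLemmas

variable {H₁ H₂ H : Type*}
  [NormedAddCommGroup H₁] [InnerProductSpace ℂ H₁]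
  [NormedAddCommGroup H₂] [InnerProductSpace ℂ H₂]
  [NormedAddCommGroup H] [InnerProductSpace ℂ H]

lemma norm_tmul (tp : HilbertTensorProduct H₁ H₂ H) (a : H₁) (b : H₂) :
    ‖tp.tmul a b‖ = ‖a‖ * ‖b‖ := by
  have h := tp.inner_tmul a a b b
  rw [inner_self_eq_norm_sq_to_K, inner_self_eq_norm_sq_to_K, inner_self_eq_norm_sq_to_K] at h
  have h2 : ‖tp.tmul a b‖ ^ 2 = (‖a‖ * ‖b‖) ^ 2 := by
    rw [mul_pow]
    exact_mod_cast h
  calc ‖tp.tmul a b‖ = Real.sqrt (‖tp.tmul a b‖ ^ 2) := (Real.sqrt_sq (norm_nonneg _)).symm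
    _ = Real.sqrt ((‖a‖ * ‖b‖) ^ 2) := by rw [h2]
    _ = ‖a‖ * ‖b‖ := Real.sqrt_sq (by positivity)

/-- An orthonormal family in a separable space has countable index type. -/
lemma countable_of_orthonormal {E ι : Type*} [NormedAddCommGroup E] [InnerProductSpace ℂ E]
    [TopologicalSpace.SeparableSpace E] {v : ι → E} (hv : Orthonormal ℂ v) : Countable ι := by
  apply Pairwise.countable_of_isOpen_disjoint (s := fun i => Metric.ball (v i) (1/2))
  · intro i j hij
    apply Metric.ball_disjoint_ball
    have h2 : ‖v i - v j‖ ^ 2 = 2 := by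
      rw [@norm_sub_sq ℂ, hv.1 i, hv.1 j, hv.2 hij]
      norm_num
    have hnn := norm_nonneg (v i - v j)
    rw [dist_eq_norm]
    nlinarith
  · intro i; exact Metric.isOpen_ball
  · intro i; exact Metric.nonempty_ball.2 (by norm_num)

section Riesz
variable [CompleteSpace H₁] [CompleteSpace H₂]

/-- The continuous linear functional `a ↦ ⟪h, a ⊗ b⟫`. -/
def rieszLfun (tp : HilbertTensorProduct H₁ H₂ H) (h : H) (b : H₂) : H₁ →L[ℂ] ℂ :=
  LinearMap.mkContinuous
    { toFun := fun a => @inner ℂ _ _ h (tp.tmul a b)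
      map_add' := fun x y => by simp [inner_add_right]
      map_smul' := fun c x => by simp [inner_smul_right] }
    (‖h‖ * ‖b‖)
    (fun a => by
      calc ‖@inner ℂ _ _ h (tp.tmul a b)‖ ≤ ‖h‖ * ‖tp.tmul a b‖ := norm_inner_le_norm _ _
        _ = ‖h‖ * ‖b‖ * ‖a‖ := by rw [norm_tmul]; ring)

/-- Riesz vector `u` with `⟪u, a⟫ = ⟪h, a ⊗ b⟫`. -/
def rieszL (tp : HilbertTensorProduct H₁ H₂ H) (h : H) (b : H₂) : H₁ :=
  (InnerProductSpace.toDual ℂ H₁).symm (rieszLfun tp h b)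

lemma rieszL_inner (tp : HilbertTensorProduct H₁ H₂ H) (h : H) (b : H₂) (a : H₁) :
    @inner ℂ _ _ (rieszL tp h b) a = @inner ℂ _ _ h (tp.tmul a b) :=
  InnerProductSpace.toDual_symm_apply

/-- The continuous linear functional `b ↦ ⟪h, a ⊗ b⟫`. -/
def rieszRfun (tp : HilbertTensorProduct H₁ H₂ H) (h : H) (a : H₁) : H₂ →L[ℂ] ℂ :=
  LinearMap.mkContinuous
    { toFun := fun b => @inner ℂ _ _ h (tp.tmul a b)
      map_add' := fun x y => by simp [inner_add_right]
      map_smul' := fun c x => by simp [inner_smul_right] }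
    (‖h‖ * ‖a‖)
    (fun b => by
      calc ‖@inner ℂ _ _ h (tp.tmul a b)‖ ≤ ‖h‖ * ‖tp.tmul a b‖ := norm_inner_le_norm _ _
        _ = ‖h‖ * ‖a‖ * ‖b‖ := by rw [norm_tmul]; ring)

/-- Riesz vector `w` with `⟪w, b⟫ = ⟪h, a ⊗ b⟫`. -/
def rieszR (tp : HilbertTensorProduct H₁ H₂ H) (h : H) (a : H₁) : H₂ :=
  (InnerProductSpace.toDual ℂ H₂).symm (rieszRfun tp h a)

lemma rieszR_inner (tp : HilbertTensorProduct H₁ H₂ H) (h : H) (a : H₁) (b : H₂) :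
    @inner ℂ _ _ (rieszR tp h a) b = @inner ℂ _ _ h (tp.tmul a b) :=
  InnerProductSpace.toDual_symm_apply

lemma nnnorm_inner_symm' {E : Type*} [NormedAddCommGroup E] [InnerProductSpace ℂ E] (x y : E) :
    ‖@inner ℂ _ _ x y‖₊ = ‖@inner ℂ _ _ y x‖₊ :=
  NNReal.coe_injective (by simpa using norm_inner_symm (𝕜 := ℂ) x y)

lemma nn_tensor_rieszR (tp : HilbertTensorProduct H₁ H₂ H) (h : H) (a : H₁) (b : H₂) :
    ‖pinner h (tp.tmul a b)‖₊ = ‖pinner (rieszR tp h a) b‖₊ := by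
  unfold pinner
  rw [nnnorm_inner_symm' (tp.tmul a b) h, ← rieszR_inner tp h a b,
    nnnorm_inner_symm' (rieszR tp h a) b]

lemma nn_rieszR_basis (tp : HilbertTensorProduct H₁ H₂ H) (h : H) (a : H₁) (b : H₂) :
    ‖@inner ℂ _ _ b (rieszR tp h a)‖₊ = ‖pinner (rieszL tp h b) a‖₊ := by
  unfold pinner
  rw [nnnorm_inner_symm' b (rieszR tp h a), rieszR_inner tp h a b, ← rieszL_inner tp h b a,
    nnnorm_inner_symm' (rieszL tp h b) a]

lemma nn_rieszL_basis (tp : HilbertTensorProduct H₁ H₂ H) (h : H) (a : H₁) (b : H₂) :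
    ‖@inner ℂ _ _ a (rieszL tp h b)‖₊ = ‖pinner h (tp.tmul a b)‖₊ := by
  unfold pinner
  rw [nnnorm_inner_symm' a (rieszL tp h b), rieszL_inner tp h b a,
    nnnorm_inner_symm' h (tp.tmul a b)]

end Riesz

/-- Parseval's identity in `ℝ≥0∞` form. -/
lemma parseval_ennreal {E ι : Type*} [NormedAddCommGroup E] [InnerProductSpace ℂ E]
    [CompleteSpace E] (b : HilbertBasis ι ℂ E) (w : E) :
    ∑' i, (‖@inner ℂ _ _ (b i) w‖₊ : ℝ≥0∞) ^ 2 = (‖w‖₊ : ℝ≥0∞) ^ 2 := by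
  have hs := b.hasSum_inner_mul_inner w w
  have heq : (fun i => (@inner ℂ _ _ w (b i) * @inner ℂ _ _ (b i) w).re)
      = fun i => ‖@inner ℂ _ _ (b i) w‖ ^ 2 := by
    funext i
    rw [← inner_conj_symm w (b i), RCLike.conj_mul]
    norm_cast
  have hre : HasSum (fun i => ‖@inner ℂ _ _ (b i) w‖ ^ 2) (‖w‖ ^ 2) := by
    have := Complex.hasSum_re hs
    rw [heq] at this
    have hww : (@inner ℂ _ _ w w).re = ‖w‖ ^ 2 := by
      rw [inner_self_eq_norm_sq_to_K]; norm_cast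
    rwa [hww] at this
  calc ∑' i, (‖@inner ℂ _ _ (b i) w‖₊ : ℝ≥0∞) ^ 2
      = ∑' i, ENNReal.ofReal (‖@inner ℂ _ _ (b i) w‖ ^ 2) := by
        refine tsum_congr fun i => ?_
        rw [ENNReal.ofReal_pow (norm_nonneg _), ofReal_norm, enorm_eq_nnnorm]
    _ = ENNReal.ofReal (∑' i, ‖@inner ℂ _ _ (b i) w‖ ^ 2) :=
        (ENNReal.ofReal_tsum_of_nonneg (fun i => by positivity) hre.summable).symm
    _ = ENNReal.ofReal (‖w‖ ^ 2) := by rw [hre.tsum_eq]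
    _ = (‖w‖₊ : ℝ≥0∞) ^ 2 := by
        rw [ENNReal.ofReal_pow (norm_nonneg _), ofReal_norm, enorm_eq_nnnorm]

/-- Bessel's inequality in `ℝ≥0∞` form. -/
lemma bessel_ennreal {E ι : Type*} [NormedAddCommGroup E] [InnerProductSpace ℂ E]
    {v : ι → E} (hv : Orthonormal ℂ v) (x : E) :
    ∑' i, (‖@inner ℂ _ _ (v i) x‖₊ : ℝ≥0∞) ^ 2 ≤ (‖x‖₊ : ℝ≥0∞) ^ 2 := by
  rw [ENNReal.tsum_eq_iSup_sum]
  refine iSup_le fun s => ?_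
  calc ∑ i ∈ s, (‖@inner ℂ _ _ (v i) x‖₊ : ℝ≥0∞) ^ 2
      = ∑ i ∈ s, ENNReal.ofReal (‖@inner ℂ _ _ (v i) x‖ ^ 2) := by
        refine Finset.sum_congr rfl fun i _ => ?_
        rw [ENNReal.ofReal_pow (norm_nonneg _), ofReal_norm, enorm_eq_nnnorm]
    _ = ENNReal.ofReal (∑ i ∈ s, ‖@inner ℂ _ _ (v i) x‖ ^ 2) :=
        (ENNReal.ofReal_sum_of_nonneg fun i _ => by positivity).symm
    _ ≤ ENNReal.ofReal (‖x‖ ^ 2) := ENNReal.ofReal_le_ofReal (hv.sum_inner_products_le x)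
    _ = (‖x‖₊ : ℝ≥0∞) ^ 2 := by
        rw [ENNReal.ofReal_pow (norm_nonneg _), ofReal_norm, enorm_eq_nnnorm]

/-- Cauchy–Schwarz for `ℝ≥0∞`-valued series. -/
lemma ennreal_cs (a c : ℕ → ℝ≥0∞) :
    (∑' k, a k * c k) ^ 2 ≤ (∑' k, (a k) ^ 2) * (∑' k, (c k) ^ 2) := by
  have hpq : Real.HolderConjugate 2 2 := Real.HolderConjugate.two_two
  have H := ENNReal.lintegral_mul_le_Lp_mul_Lq (Measure.count : Measure ℕ) hpq
    (measurable_from_nat (f := a)).aemeasurable (measurable_from_nat (f := c)).aemeasurable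
  rw [lintegral_count, lintegral_count, lintegral_count] at H
  have H2 : (∑' k, a k * c k) ≤
      (∑' k, a k ^ (2:ℝ)) ^ (1/2 : ℝ) * (∑' k, c k ^ (2:ℝ)) ^ (1/2 : ℝ) := H
  calc (∑' k, a k * c k) ^ 2
      ≤ ((∑' k, a k ^ (2:ℝ)) ^ (1/2 : ℝ) * (∑' k, c k ^ (2:ℝ)) ^ (1/2 : ℝ)) ^ 2 :=
        pow_le_pow_left₀ zero_le H2 2
    _ = (∑' k, a k ^ (2:ℝ)) * (∑' k, c k ^ (2:ℝ)) := by
        rw [mul_pow, ← ENNReal.rpow_natCast (_ ^ (1/2:ℝ)) 2, ← ENNReal.rpow_natCast (_ ^ (1/2:ℝ)) 2,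
          ← ENNReal.rpow_mul, ← ENNReal.rpow_mul]
        norm_num
    _ = (∑' k, (a k) ^ 2) * (∑' k, (c k) ^ 2) := by
        simp_rw [ENNReal.rpow_two]

/-- Weighted Cauchy–Schwarz for `ℝ≥0∞`-valued series. -/
lemma ennreal_cs_weighted (a l : ℕ → ℝ≥0∞) (hlt : ∀ k, l k ≠ ⊤) (h0 : ∀ k, l k = 0 → a k = 0) :
    (∑' k, a k) ^ 2 ≤ (∑' k, l k) * (∑' k, (a k) ^ 2 / l k) := by
  have key : ∀ k, a k = (l k) ^ (1/2 : ℝ) * (a k / (l k) ^ (1/2 : ℝ)) := fun k => by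
    rcases eq_or_ne (l k) 0 with h | h
    · rw [h0 k h, h, ENNReal.zero_rpow_of_pos (by norm_num)]
      simp
    · have hne : (l k) ^ (1/2 : ℝ) ≠ 0 := by
        simp [ENNReal.rpow_eq_zero_iff, h, hlt k]
      have hnt : (l k) ^ (1/2 : ℝ) ≠ ⊤ := by
        simp [ENNReal.rpow_eq_top_iff, h, hlt k]
      rw [ENNReal.mul_div_cancel hne hnt]
  have hsq : ∀ k, ((l k) ^ (1/2 : ℝ)) ^ 2 = l k := fun k => by
    rw [← ENNReal.rpow_natCast (_ ^ (1/2:ℝ)) 2, ← ENNReal.rpow_mul]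
    norm_num
  calc (∑' k, a k) ^ 2
      = (∑' k, (l k) ^ (1/2 : ℝ) * (a k / (l k) ^ (1/2 : ℝ))) ^ 2 := by
        congr 1; exact tsum_congr key
    _ ≤ (∑' k, ((l k) ^ (1/2 : ℝ)) ^ 2) * (∑' k, (a k / (l k) ^ (1/2 : ℝ)) ^ 2) :=
        ennreal_cs _ _
    _ = (∑' k, l k) * (∑' k, (a k) ^ 2 / l k) := by
        congr 1
        · exact tsum_congr hsq
        · refine tsum_congr fun k => ?_
          rw [div_eq_mul_inv, mul_pow, ← ENNReal.inv_pow, hsq k, ← div_eq_mul_inv]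

lemma enorm_hasSum_le {c : ℕ → ℂ} {s : ℂ} (hs : HasSum c s) :
    (‖s‖₊ : ℝ≥0∞) ≤ ∑' k, (‖c k‖₊ : ℝ≥0∞) := by
  by_cases hsum : Summable fun k => ‖c k‖₊
  · rw [← ENNReal.coe_tsum hsum]
    exact_mod_cast (hs.tsum_eq ▸ nnnorm_tsum_le hsum : ‖s‖₊ ≤ ∑' k, ‖c k‖₊)
  · have : ∑' k, (‖c k‖₊ : ℝ≥0∞) = ⊤ := by
      by_contra hne
      exact hsum (ENNReal.tsum_coe_ne_top_iff_summable.1 hne)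
    rw [this]; exact le_top

section Meas

variable {X₁ X₂ : Type*} [MeasurableSpace X₁] [MeasurableSpace X₂]

lemma meas_tensor (μ₁ : Measure X₁) (μ₂ : Measure X₂) [SFinite μ₁] [SFinite μ₂]
    (tp : HilbertTensorProduct H₁ H₂ H) {fk : X₁ → H₁} {gk : X₂ → H₂}
    (hf1 : ∀ a : H₁, AEMeasurable (fun x₁ => pinner a (fk x₁)) μ₁)
    (hg1 : ∀ b : H₂, AEMeasurable (fun x₂ => pinner b (gk x₂)) μ₂) (h : H) :
    AEMeasurable (fun x : X₁ × X₂ => pinner h (tp.tmul (fk x.1) (gk x.2))) (μ₁.prod μ₂) := by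
  have hspan : ∀ z ∈ Submodule.span ℂ {z : H | ∃ a b, z = tp.tmul a b},
      AEMeasurable (fun x : X₁ × X₂ => pinner z (tp.tmul (fk x.1) (gk x.2))) (μ₁.prod μ₂) := by
    intro z hz
    induction hz using Submodule.span_induction with
    | mem z hzs =>
        obtain ⟨a, b, rfl⟩ := hzs
        have : (fun x : X₁ × X₂ => pinner (tp.tmul a b) (tp.tmul (fk x.1) (gk x.2)))
            = fun x : X₁ × X₂ => pinner a (fk x.1) * pinner b (gk x.2) := by
          funext x
          unfold pinner
          exact tp.inner_tmul (fk x.1) a (gk x.2) b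
        rw [this]
        exact ((hf1 a).comp_quasiMeasurePreserving
            MeasureTheory.Measure.quasiMeasurePreserving_fst).mul
          ((hg1 b).comp_quasiMeasurePreserving
            MeasureTheory.Measure.quasiMeasurePreserving_snd)
    | zero => simp only [pinner, inner_zero_right]; exact aemeasurable_const
    | add u v _ _ hu hv =>
        simp only [pinner, inner_add_right]
        exact hu.add hv
    | smul c u _ hu =>
        simp only [pinner, inner_smul_right]
        exact hu.const_mul c
  rcases mem_closure_iff_seq_limit.mp (tp.dense_span h) with ⟨u, hu, hulim⟩
  refine aemeasurable_of_tendsto_metrizable_ae Filter.atTop (fun n => hspan (u n) (hu n)) ?_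
  refine Filter.Eventually.of_forall fun x => ?_
  exact Filter.Tendsto.inner (tendsto_const_nhds (x := tp.tmul (fk x.1) (gk x.2))) hulim

variable [CompleteSpace H₁] [CompleteSpace H₂]
variable [TopologicalSpace.SeparableSpace H₁] [TopologicalSpace.SeparableSpace H₂]

lemma key_estimate (μ₁ : Measure X₁) (μ₂ : Measure X₂) [SigmaFinite μ₁] [SigmaFinite μ₂]
    (tp : HilbertTensorProduct H₁ H₂ H) {fk : X₁ → H₁} {gk : X₂ → H₂} {Bk Bk' : ℝ≥0∞}
    (hfk : IsBesselMapping μ₁ fk Bk) (hgk : IsBesselMapping μ₂ gk Bk') (h : H)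
    (hmeas : AEMeasurable (fun x : X₁ × X₂ => pinner h (tp.tmul (fk x.1) (gk x.2)))
      (μ₁.prod μ₂)) :
    ∫⁻ x, (‖pinner h (tp.tmul (fk x.1) (gk x.2))‖₊ : ℝ≥0∞) ^ 2 ∂(μ₁.prod μ₂)
      ≤ Bk * Bk' * (‖h‖₊ : ℝ≥0∞) ^ 2 := by
  classical
  obtain ⟨s₁, b₁, -⟩ := exists_hilbertBasis ℂ H₁
  obtain ⟨s₂, b₂, -⟩ := exists_hilbertBasis ℂ H₂
  haveI : Countable s₁ := countable_of_orthonormal b₁.orthonormal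
  haveI : Countable s₂ := countable_of_orthonormal b₂.orthonormal
  rw [MeasureTheory.lintegral_prod _ (hmeas.nnnorm.coe_nnreal_ennreal.pow_const 2)]
  have step1 : ∀ x₁ : X₁,
      ∫⁻ x₂, (‖pinner h (tp.tmul (fk x₁) (gk x₂))‖₊ : ℝ≥0∞) ^ 2 ∂μ₂
        ≤ Bk' * (‖rieszR tp h (fk x₁)‖₊ : ℝ≥0∞) ^ 2 := by
    intro x₁
    have : ∀ x₂, (‖pinner h (tp.tmul (fk x₁) (gk x₂))‖₊ : ℝ≥0∞) ^ 2
        = (‖pinner (rieszR tp h (fk x₁)) (gk x₂)‖₊ : ℝ≥0∞) ^ 2 := fun x₂ => by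
      rw [nn_tensor_rieszR]
    rw [lintegral_congr this]
    exact hgk.2.2 (rieszR tp h (fk x₁))
  calc ∫⁻ x₁, ∫⁻ x₂, (‖pinner h (tp.tmul (fk x₁) (gk x₂))‖₊ : ℝ≥0∞) ^ 2 ∂μ₂ ∂μ₁
      ≤ ∫⁻ x₁, Bk' * (‖rieszR tp h (fk x₁)‖₊ : ℝ≥0∞) ^ 2 ∂μ₁ := lintegral_mono step1
    _ = Bk' * ∫⁻ x₁, (‖rieszR tp h (fk x₁)‖₊ : ℝ≥0∞) ^ 2 ∂μ₁ :=
        lintegral_const_mul' _ _ hgk.1.ne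
    _ = Bk' * ∑' j : s₂, ∫⁻ x₁, (‖pinner (rieszL tp h (b₂ j)) (fk x₁)‖₊ : ℝ≥0∞) ^ 2 ∂μ₁ := by
        congr 1
        have hpar : ∀ x₁, (‖rieszR tp h (fk x₁)‖₊ : ℝ≥0∞) ^ 2
            = ∑' j : s₂, (‖pinner (rieszL tp h (b₂ j)) (fk x₁)‖₊ : ℝ≥0∞) ^ 2 := fun x₁ => by
          rw [← parseval_ennreal b₂ (rieszR tp h (fk x₁))]
          exact tsum_congr fun j => by rw [nn_rieszR_basis]
        rw [lintegral_congr hpar]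
        exact lintegral_tsum fun j => ((hfk.2.1 _).nnnorm.coe_nnreal_ennreal.pow_const 2)
    _ ≤ Bk' * ∑' j : s₂, Bk * (‖rieszL tp h (b₂ j)‖₊ : ℝ≥0∞) ^ 2 := by
        gcongr with j
        exact hfk.2.2 (rieszL tp h (b₂ j))
    _ = Bk' * (Bk * ∑' j : s₂, (‖rieszL tp h (b₂ j)‖₊ : ℝ≥0∞) ^ 2) := by
        rw [ENNReal.tsum_mul_left]
    _ ≤ Bk' * (Bk * (‖h‖₊ : ℝ≥0∞) ^ 2) := by
        gcongr
        -- Parseval on H₁ then Bessel for the orthonormal family of simple tensors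
        have hpar : ∀ j : s₂, (‖rieszL tp h (b₂ j)‖₊ : ℝ≥0∞) ^ 2
            = ∑' i : s₁, (‖pinner h (tp.tmul (b₁ i) (b₂ j))‖₊ : ℝ≥0∞) ^ 2 := fun j => by
          rw [← parseval_ennreal b₁ (rieszL tp h (b₂ j))]
          exact tsum_congr fun i => by rw [nn_rieszL_basis]
        calc ∑' j : s₂, (‖rieszL tp h (b₂ j)‖₊ : ℝ≥0∞) ^ 2
            = ∑' (j : s₂) (i : s₁), (‖pinner h (tp.tmul (b₁ i) (b₂ j))‖₊ : ℝ≥0∞) ^ 2 :=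
              tsum_congr hpar
          _ = ∑' p : s₂ × s₁, (‖pinner h (tp.tmul (b₁ p.2) (b₂ p.1))‖₊ : ℝ≥0∞) ^ 2 :=
              (ENNReal.tsum_prod (f := fun j i =>
                (‖pinner h (tp.tmul (b₁ i) (b₂ j))‖₊ : ℝ≥0∞) ^ 2)).symm
          _ ≤ (‖h‖₊ : ℝ≥0∞) ^ 2 := by
              have hv : Orthonormal ℂ (fun p : s₂ × s₁ => tp.tmul (b₁ p.2) (b₂ p.1)) := by
                rw [orthonormal_iff_ite]
                intro p q
                rw [tp.inner_tmul, orthonormal_iff_ite.mp b₁.orthonormal,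
                  orthonormal_iff_ite.mp b₂.orthonormal]
                by_cases h1 : p.1 = q.1 <;> by_cases h2 : p.2 = q.2 <;>
                  simp [Prod.ext_iff, h1, h2]
              exact bessel_ennreal hv h
    _ = Bk * Bk' * (‖h‖₊ : ℝ≥0∞) ^ 2 := by ring

end Meas

end AuxLemmas

/-- If `f_k`, `g_k` are Bessel mappings with bounds `B_k`, `B'_k`
such that `B = (∑_k B_k)(∑_l B'_l) < ∞`, and the series
`F(x₁,x₂) = ∑_k f_k(x₁) ⊗ g_k(x₂)` converges weakly a.e., then `F` is a Bessel
mapping for `H₁ ⊗ H₂` with Bessel bound `B`. -/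
theorem nonsimple_tensor_isBessel
    {X₁ X₂ : Type*} [MeasurableSpace X₁] [MeasurableSpace X₂]
    {H₁ H₂ H : Type*}
    [NormedAddCommGroup H₁] [InnerProductSpace ℂ H₁] [CompleteSpace H₁]
      [TopologicalSpace.SeparableSpace H₁]
    [NormedAddCommGroup H₂] [InnerProductSpace ℂ H₂] [CompleteSpace H₂]
      [TopologicalSpace.SeparableSpace H₂]
    [NormedAddCommGroup H] [InnerProductSpace ℂ H] [CompleteSpace H]
      [TopologicalSpace.SeparableSpace H]
    (μ₁ : Measure X₁) (μ₂ : Measure X₂) [SigmaFinite μ₁] [SigmaFinite μ₂]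
    (tp : HilbertTensorProduct H₁ H₂ H)
    (f : ℕ → X₁ → H₁) (g : ℕ → X₂ → H₂) (Bf Bg : ℕ → ℝ≥0∞)
    (hf : ∀ k, IsBesselMapping μ₁ (f k) (Bf k))
    (hg : ∀ k, IsBesselMapping μ₂ (g k) (Bg k))
    (hB : (∑' k, Bf k) * (∑' l, Bg l) < ⊤)
    (F : X₁ × X₂ → H)
    (hconv : ∀ᵐ x ∂(μ₁.prod μ₂), ∀ h : H,
      HasSum (fun k => pinner h (tp.tmul (f k x.1) (g k x.2))) (pinner h (F x))) :
    IsBesselMapping (μ₁.prod μ₂) F ((∑' k, Bf k) * (∑' l, Bg l)) := by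
  classical
  have hTmeas : ∀ (k : ℕ) (h : H),
      AEMeasurable (fun x : X₁ × X₂ => pinner h (tp.tmul (f k x.1) (g k x.2))) (μ₁.prod μ₂) :=
    fun k h => meas_tensor μ₁ μ₂ tp (hf k).2.1 (hg k).2.1 h
  have hWM : WeaklyMeasurable (μ₁.prod μ₂) F := by
    intro h
    refine aemeasurable_of_tendsto_metrizable_ae Filter.atTop
      (f := fun n x => ∑ k ∈ Finset.range n, pinner h (tp.tmul (f k x.1) (g k x.2)))
      (fun n => Finset.aemeasurable_fun_sum _ fun k _ => hTmeas k h) ?_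
    filter_upwards [hconv] with x hx using (hx h).tendsto_sum_nat
  refine ⟨hB, hWM, ?_⟩
  intro h
  have hkey : ∀ k, ∫⁻ x, (‖pinner h (tp.tmul (f k x.1) (g k x.2))‖₊ : ℝ≥0∞) ^ 2 ∂(μ₁.prod μ₂)
      ≤ Bf k * Bg k * (‖h‖₊ : ℝ≥0∞) ^ 2 :=
    fun k => key_estimate μ₁ μ₂ tp (hf k) (hg k) h (hTmeas k h)
  have hF1 : frameInt (μ₁.prod μ₂) F h
      ≤ ∫⁻ x, (∑' k, (‖pinner h (tp.tmul (f k x.1) (g k x.2))‖₊ : ℝ≥0∞)) ^ 2 ∂(μ₁.prod μ₂) := by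
    refine lintegral_mono_ae ?_
    filter_upwards [hconv] with x hx
    exact pow_le_pow_left₀ zero_le (enorm_hasSum_le (hx h)) 2
  by_cases hdeg : ∀ k, ∫⁻ x, (‖pinner h (tp.tmul (f k x.1) (g k x.2))‖₊ : ℝ≥0∞) ^ 2
      ∂(μ₁.prod μ₂) = 0
  · -- degenerate case: all the terms vanish a.e.
    have hz : ∀ᵐ x ∂(μ₁.prod μ₂), ∀ k, pinner h (tp.tmul (f k x.1) (g k x.2)) = 0 := by
      rw [MeasureTheory.ae_all_iff]
      intro k
      have h0 := (lintegral_eq_zero_iff' ((hTmeas k h).nnnorm.coe_nnreal_ennreal.pow_const 2)).mp (hdeg k)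
      filter_upwards [h0] with x hx
      have : (‖pinner h (tp.tmul (f k x.1) (g k x.2))‖₊ : ℝ≥0∞) ^ 2 = 0 := hx
      simpa using this
    have hF0 : frameInt (μ₁.prod μ₂) F h = 0 := by
      have hae : ∀ᵐ x ∂(μ₁.prod μ₂), (‖pinner h (F x)‖₊ : ℝ≥0∞) ^ 2 = 0 := by
        filter_upwards [hconv, hz] with x hx hxz
        have hsum0 : HasSum (fun k : ℕ => (0 : ℂ)) (pinner h (F x)) := by
          have := hx h
          rwa [show (fun k => pinner h (tp.tmul (f k x.1) (g k x.2))) = fun _ : ℕ => (0:ℂ)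
            from funext hxz] at this
        have : pinner h (F x) = 0 := hsum0.unique hasSum_zero
        simp [this]
      calc frameInt (μ₁.prod μ₂) F h = ∫⁻ _, 0 ∂(μ₁.prod μ₂) := lintegral_congr_ae hae
        _ = 0 := lintegral_zero
    exact hF0 ▸ zero_le
  · push_neg at hdeg
    obtain ⟨k₀, hk₀⟩ := hdeg
    have hk₀pos : Bf k₀ * Bg k₀ * (‖h‖₊ : ℝ≥0∞) ^ 2 ≠ 0 := by
      intro h0
      exact hk₀ (le_antisymm (h0 ▸ hkey k₀) zero_le)
    have hSf0 : (∑' k, Bf k) ≠ 0 := by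
      intro h0
      have : Bf k₀ = 0 := by
        have := ENNReal.tsum_eq_zero.mp h0 k₀
        exact this
      exact hk₀pos (by simp [this])
    have hSg0 : (∑' l, Bg l) ≠ 0 := by
      intro h0
      have : Bg k₀ = 0 := ENNReal.tsum_eq_zero.mp h0 k₀
      exact hk₀pos (by simp [this])
    have hSf_top : (∑' k, Bf k) ≠ ⊤ := by
      intro htop
      rw [htop, ENNReal.top_mul hSg0] at hB
      exact lt_irrefl ⊤ hB
    have hBfk_top : ∀ k, Bf k ≠ ⊤ := fun k =>
      ne_top_of_le_ne_top hSf_top (ENNReal.le_tsum k)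
    have hzero : ∀ᵐ x ∂(μ₁.prod μ₂), ∀ k, Bf k = 0 →
        (‖pinner h (tp.tmul (f k x.1) (g k x.2))‖₊ : ℝ≥0∞) = 0 := by
      rw [MeasureTheory.ae_all_iff]
      intro k
      by_cases hbk : Bf k = 0
      · have h0 : ∫⁻ x, (‖pinner h (tp.tmul (f k x.1) (g k x.2))‖₊ : ℝ≥0∞) ^ 2
            ∂(μ₁.prod μ₂) = 0 :=
          le_antisymm (by simpa [hbk] using hkey k) zero_le
        have h1 := (lintegral_eq_zero_iff' ((hTmeas k h).nnnorm.coe_nnreal_ennreal.pow_const 2)).mp h0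
        filter_upwards [h1] with x hx
        intro _
        have : (‖pinner h (tp.tmul (f k x.1) (g k x.2))‖₊ : ℝ≥0∞) ^ 2 = 0 := hx
        simpa using this
      · filter_upwards with x hc
        exact absurd hc hbk
    have hF2 : ∫⁻ x, (∑' k, (‖pinner h (tp.tmul (f k x.1) (g k x.2))‖₊ : ℝ≥0∞)) ^ 2
        ∂(μ₁.prod μ₂)
        ≤ (∑' k, Bf k) * ∫⁻ x,
            ∑' k, (‖pinner h (tp.tmul (f k x.1) (g k x.2))‖₊ : ℝ≥0∞) ^ 2 / Bf k
          ∂(μ₁.prod μ₂) := by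
      rw [← lintegral_const_mul' _ _ hSf_top]
      refine lintegral_mono_ae ?_
      filter_upwards [hzero] with x hx
      exact ennreal_cs_weighted _ _ hBfk_top hx
    have hF3 : ∫⁻ x, ∑' k, (‖pinner h (tp.tmul (f k x.1) (g k x.2))‖₊ : ℝ≥0∞) ^ 2 / Bf k
          ∂(μ₁.prod μ₂)
        = ∑' k, (∫⁻ x, (‖pinner h (tp.tmul (f k x.1) (g k x.2))‖₊ : ℝ≥0∞) ^ 2
            ∂(μ₁.prod μ₂)) / Bf k := by
      rw [lintegral_tsum fun k => by
        simpa [div_eq_mul_inv] using ((hTmeas k h).nnnorm.coe_nnreal_ennreal.pow_const 2).mul_const (Bf k)⁻¹]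
      refine tsum_congr fun k => ?_
      simp_rw [div_eq_mul_inv]
      exact lintegral_mul_const'' _ ((hTmeas k h).nnnorm.coe_nnreal_ennreal.pow_const 2)
    have hF4 : ∑' k, (∫⁻ x, (‖pinner h (tp.tmul (f k x.1) (g k x.2))‖₊ : ℝ≥0∞) ^ 2
          ∂(μ₁.prod μ₂)) / Bf k
        ≤ (∑' l, Bg l) * (‖h‖₊ : ℝ≥0∞) ^ 2 := by
      have : ∀ k, (∫⁻ x, (‖pinner h (tp.tmul (f k x.1) (g k x.2))‖₊ : ℝ≥0∞) ^ 2
            ∂(μ₁.prod μ₂)) / Bf k ≤ Bg k * (‖h‖₊ : ℝ≥0∞) ^ 2 := by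
        intro k
        refine le_trans (ENNReal.div_le_div_right (hkey k) _) ?_
        rcases eq_or_ne (Bf k) 0 with h0 | h0
        · simp [h0]
        · rw [mul_assoc, mul_div_assoc, ENNReal.mul_div_cancel h0 (hBfk_top k)]
      calc ∑' k, (∫⁻ x, (‖pinner h (tp.tmul (f k x.1) (g k x.2))‖₊ : ℝ≥0∞) ^ 2
            ∂(μ₁.prod μ₂)) / Bf k
          ≤ ∑' k, Bg k * (‖h‖₊ : ℝ≥0∞) ^ 2 := ENNReal.tsum_le_tsum this
        _ = (∑' l, Bg l) * (‖h‖₊ : ℝ≥0∞) ^ 2 := ENNReal.tsum_mul_right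
    calc frameInt (μ₁.prod μ₂) F h
        ≤ (∑' k, Bf k) * ∫⁻ x,
            ∑' k, (‖pinner h (tp.tmul (f k x.1) (g k x.2))‖₊ : ℝ≥0∞) ^ 2 / Bf k
          ∂(μ₁.prod μ₂) := le_trans hF1 hF2
      _ ≤ (∑' k, Bf k) * ((∑' l, Bg l) * (‖h‖₊ : ℝ≥0∞) ^ 2) := by
          rw [hF3]; exact mul_le_mul_right hF4 _
      _ = (∑' k, Bf k) * (∑' l, Bg l) * (‖h‖₊ : ℝ≥0∞) ^ 2 := by ring

end ContFrame
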